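/- (Distance formula (4.3), edge A₃A₀) Assume B < 0, sin²(π/u) > cos²(π/v), and sin²(π/w) > cos²(π/v) (so that a₀₀ < 0 and a₃₃ < 0, i.e. both principal vertices A₀ and A₃ are proper points). Then −a₀₃/√(a₀₀·a₃₃) = √(1 − sin²(π/v)/(B·a₀₀·a₃₃)). (This quantity is cosh of the hyperbolic distance between the principal vertices A₃ and A₀ of the orthoscheme W_{uvw}.) -/

import Mathlib

open Real Matrix

/-- The Coxeter–Schläfli matrix of the complete orthoscheme `W_{uvw}`. -/
noncomputable def CSmatrix (u v w : ℝ) : Matrix (Fin 4) (Fin 4) ℝ :=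
  !![1, -cos (π/u), 0, 0;
     -cos (π/u), 1, -cos (π/v), 0;
     0, -cos (π/v), 1, -cos (π/w);
     0, 0, -cos (π/w), 1]

/-- The inverse of the Coxeter–Schläfli matrix; its entries are the `a_{ij}`. -/
noncomputable def CSinv (u v w : ℝ) : Matrix (Fin 4) (Fin 4) ℝ :=
  (CSmatrix u v w)⁻¹

lemma CSdet (u v w : ℝ) : (CSmatrix u v w).det
    = (1 - cos (π/u)^2) * (1 - cos (π/w)^2) - cos (π/v)^2 := by
  rw [CSmatrix, Matrix.det_succ_row_zero]
  simp [Fin.sum_univ_succ, Matrix.det_fin_three, Matrix.submatrix, Fin.succAbove]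
  ring

set_option maxHeartbeats 1000000 in
lemma CSright_inv (a b c D : ℝ) (u v w : ℝ)
    (ha : a = cos (π/u)) (hb : b = cos (π/v)) (hc : c = cos (π/w))
    (hD : D = (1 - a^2) * (1 - c^2) - b^2) (hDne : D ≠ 0) :
    CSmatrix u v w * (D⁻¹ •
      !![1 - b^2 - c^2, a*(1-c^2), a*b, a*b*c;
         a*(1-c^2), 1-c^2, b, b*c;
         a*b, b, 1-a^2, c*(1-a^2);
         a*b*c, b*c, c*(1-a^2), 1 - a^2 - b^2]) = 1 := by
  subst hD
  ext i j
  fin_cases i <;> fin_cases j <;>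
    simp [CSmatrix, Matrix.mul_apply, Fin.sum_univ_four, Matrix.smul_apply, smul_eq_mul,
      Matrix.one_apply, ← ha, ← hb, ← hc] <;>
    field_simp <;> ring

theorem stmt9 (u v w : ℝ) (hu : 3 ≤ u) (hv : 3 ≤ v) (hw : 3 ≤ w)
    (hBneg : (CSmatrix u v w).det < 0)
    (h1 : cos (π/v) ^ 2 < sin (π/u) ^ 2)
    (h2 : cos (π/v) ^ 2 < sin (π/w) ^ 2) :
    CSinv u v w 0 0 < 0 ∧ CSinv u v w 3 3 < 0 ∧
    -CSinv u v w 0 3 / Real.sqrt (CSinv u v w 0 0 * CSinv u v w 3 3) =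
      Real.sqrt (1 - sin (π/v) ^ 2 /
        ((CSmatrix u v w).det * CSinv u v w 0 0 * CSinv u v w 3 3)) := by
  set a := cos (π/u) with ha_def
  set b := cos (π/v) with hb_def
  set c := cos (π/w) with hc_def
  set D := (1 - a^2) * (1 - c^2) - b^2 with hD_def
  have hdet : (CSmatrix u v w).det = D := CSdet u v w
  have hDneg : D < 0 := hdet ▸ hBneg
  have hDne : D ≠ 0 := ne_of_lt hDneg
  -- positivity of a, b, c
  have hcpos : ∀ t : ℝ, 3 ≤ t → 0 < cos (π/t) := by
    intro t ht
    apply Real.cos_pos_of_mem_Ioo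
    constructor
    · have : 0 < π / t := div_pos Real.pi_pos (by linarith)
      linarith [Real.pi_pos]
    · rw [div_lt_div_iff₀ (by linarith) (by norm_num)]
      nlinarith [Real.pi_pos]
  have ha : 0 < a := hcpos u hu
  have hb : 0 < b := hcpos v hv
  have hc : 0 < c := hcpos w hw
  set P := 1 - b^2 - c^2 with hP_def
  set Q := 1 - a^2 - b^2 with hQ_def
  have hP : 0 < P := by
    have := Real.sin_sq (π/w); rw [hP_def]; nlinarith
  have hQ : 0 < Q := by
    have := Real.sin_sq (π/u); rw [hQ_def]; nlinarith
  -- explicit inverse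
  have hinv : CSinv u v w = D⁻¹ •
      !![P, a*(1-c^2), a*b, a*b*c;
         a*(1-c^2), 1-c^2, b, b*c;
         a*b, b, 1-a^2, c*(1-a^2);
         a*b*c, b*c, c*(1-a^2), Q] :=
    Matrix.inv_eq_right_inv (CSright_inv a b c D u v w ha_def hb_def hc_def hD_def hDne)
  have h00 : CSinv u v w 0 0 = P / D := by
    rw [hinv]; simp [Matrix.smul_apply, smul_eq_mul, div_eq_inv_mul]
  have h33 : CSinv u v w 3 3 = Q / D := by
    rw [hinv]; simp [Matrix.smul_apply, smul_eq_mul, div_eq_inv_mul]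
  have h03 : CSinv u v w 0 3 = a*b*c / D := by
    rw [hinv]; simp [Matrix.smul_apply, smul_eq_mul, div_eq_inv_mul]
  have h00neg : CSinv u v w 0 0 < 0 := by
    rw [h00]; exact div_neg_of_pos_of_neg hP hDneg
  have h33neg : CSinv u v w 3 3 < 0 := by
    rw [h33]; exact div_neg_of_pos_of_neg hQ hDneg
  refine ⟨h00neg, h33neg, ?_⟩
  rw [h00, h33, h03, hdet, Real.sin_sq]
  have e1 : P / D * (Q / D) = P * Q / D^2 := by field_simp
  have e2 : 1 - (1 - b^2) / (D * (P / D) * (Q / D)) = 1 - (1 - b^2) * D / (P * Q) := by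
    have h : D * (P / D) * (Q / D) = P * Q / D := by field_simp
    rw [h, div_div_eq_mul_div]
  rw [e1, e2]
  have hD2 : 0 < D^2 := by nlinarith
  have hy : 0 < P * Q / D^2 := div_pos (mul_pos hP hQ) hD2
  have hnn : 0 ≤ -(a*b*c/D) / Real.sqrt (P * Q / D^2) := by
    apply div_nonneg _ (Real.sqrt_nonneg _)
    have : a*b*c/D < 0 := div_neg_of_pos_of_neg (mul_pos (mul_pos ha hb) hc) hDneg
    linarith
  have key : 1 - (1 - b^2) * D / (P * Q) =
      (-(a*b*c/D) / Real.sqrt (P * Q / D^2))^2 := by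
    rw [div_pow, neg_pow, Real.sq_sqrt hy.le]
    have hPQ : P * Q ≠ 0 := (mul_pos hP hQ).ne'
    field_simp
    rw [hD_def, hP_def, hQ_def]
    ring
  rw [key, Real.sqrt_sq hnn]
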